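/- Let (η_n)_{n≥1} be maps η_n : X → H_n from a metric space X to Hilbert spaces such that ‖η_n(x)‖ = 1 for all x, and ‖η_n(x) − η_n(x')‖ ≤ n^{-(1/2+p)} whenever d(x,x') ≤ √n, for some fixed p > 0. Fix a base point x₀ ∈ X and define F : X → ⊕_{n=1}^∞ H_n by F(x) = (1/2)((η_1(x)−η_1(x₀)) ⊕ (η_2(x)−η_2(x₀)) ⊕ ⋯). Then F is well-defined (the sum ∑_n ‖η_n(x)−η_n(x₀)‖² converges) and there is a constant C > 0 with ‖F(x)−F(x')‖² ≤ d(x,x')² + C for all x, x' ∈ X. -/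
import Mathlib

set_option maxHeartbeats 2000000 in
/-- Given maps `η n : X → H n` (for `n ≥ 1`) into Hilbert spaces with
`‖η n x‖ = 1` and `‖η n x - η n x'‖ ≤ n^{-(1/2+p)}` whenever `d(x,x') ≤ √n`
(`p > 0` fixed), the map `F(x) = (1/2)(⊕_{n≥1} (η n x - η n x₀))` into the
Hilbert space direct sum is well defined (the defining series converges) and
`‖F x - F x'‖² = (1/4) ∑_n ‖η n x - η n x'‖² ≤ d(x,x')² + C` for some `C > 0`. -/
theorem direct_sum_embedding_lipschitz
    {X : Type*} [MetricSpace X]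
    (H : ℕ → Type*) [∀ n, NormedAddCommGroup (H n)] [∀ n, InnerProductSpace ℝ (H n)]
    (η : (n : ℕ) → X → H n) (p : ℝ) (hp : 0 < p)
    (hunit : ∀ n : ℕ, 1 ≤ n → ∀ x : X, ‖η n x‖ = 1)
    (hclose : ∀ n : ℕ, 1 ≤ n → ∀ x x' : X,
      dist x x' ≤ Real.sqrt n → ‖η n x - η n x'‖ ≤ (n : ℝ) ^ (-(1 / 2 + p)))
    (x₀ : X) :
    (∀ x : X, Summable fun n : ℕ => ‖η (n + 1) x - η (n + 1) x₀‖ ^ 2) ∧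
    ∃ C : ℝ, 0 < C ∧ ∀ x x' : X,
      (1 / 4) * ∑' n : ℕ, ‖η (n + 1) x - η (n + 1) x'‖ ^ 2 ≤ dist x x' ^ 2 + C := by
  have hq : -(1 + 2 * p) < -1 := by linarith
  set q : ℝ := -(1 + 2 * p) with hqdef
  have hSsum : Summable (fun n : ℕ => (n : ℝ) ^ q) := Real.summable_nat_rpow.2 hq
  have hS1 : Summable (fun n : ℕ => ((n + 1 : ℕ) : ℝ) ^ q) :=
    (summable_nat_add_iff 1).2 hSsum
  -- pointwise bound for large n
  have key : ∀ (x x' : X) (n : ℕ), dist x x' ^ 2 ≤ (n + 1 : ℕ) →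
      ‖η (n + 1) x - η (n + 1) x'‖ ^ 2 ≤ ((n + 1 : ℕ) : ℝ) ^ q := by
    intro x x' n hn
    have hb : (0 : ℝ) ≤ ((n + 1 : ℕ) : ℝ) := by positivity
    have hd : dist x x' ≤ Real.sqrt ((n + 1 : ℕ) : ℝ) :=
      (Real.le_sqrt dist_nonneg hb).2 hn
    have h := hclose (n + 1) (Nat.le_add_left 1 n) x x' hd
    calc ‖η (n + 1) x - η (n + 1) x'‖ ^ 2
        ≤ (((n + 1 : ℕ) : ℝ) ^ (-(1 / 2 + p))) ^ 2 :=
          pow_le_pow_left₀ (norm_nonneg _) h 2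
      _ = ((n + 1 : ℕ) : ℝ) ^ q := by
          rw [← Real.rpow_natCast (((n + 1 : ℕ) : ℝ) ^ (-(1 / 2 + p))) 2,
            ← Real.rpow_mul hb]
          norm_num [hqdef]
          ring_nf
  -- trivial bound for all n
  have triv : ∀ (x x' : X) (n : ℕ), ‖η (n + 1) x - η (n + 1) x'‖ ^ 2 ≤ 4 := by
    intro x x' n
    have h1 : ‖η (n + 1) x - η (n + 1) x'‖ ≤ 2 := by
      calc ‖η (n + 1) x - η (n + 1) x'‖ ≤ ‖η (n + 1) x‖ + ‖η (n + 1) x'‖ := norm_sub_le _ _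
        _ = 2 := by
          rw [hunit (n + 1) (Nat.le_add_left 1 n) x, hunit (n + 1) (Nat.le_add_left 1 n) x']
          norm_num
    nlinarith [norm_nonneg (η (n + 1) x - η (n + 1) x')]
  -- large-n bound after shifting by N = ⌈d²⌉
  have keyN : ∀ (x x' : X) (n : ℕ),
      ‖η (n + ⌈dist x x' ^ 2⌉₊ + 1) x - η (n + ⌈dist x x' ^ 2⌉₊ + 1) x'‖ ^ 2
        ≤ ((n + ⌈dist x x' ^ 2⌉₊ + 1 : ℕ) : ℝ) ^ q := by
    intro x x' n
    apply key x x' (n + ⌈dist x x' ^ 2⌉₊)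
    have h1 : dist x x' ^ 2 ≤ (⌈dist x x' ^ 2⌉₊ : ℝ) := Nat.le_ceil _
    have h2 : ((⌈dist x x' ^ 2⌉₊ : ℕ) : ℝ) ≤ ((n + ⌈dist x x' ^ 2⌉₊ + 1 : ℕ) : ℝ) := by
      exact_mod_cast Nat.le_add_left _ _ |>.trans (Nat.le_succ _)
    linarith
  -- summability for any pair
  have hsum : ∀ x x' : X, Summable fun n : ℕ => ‖η (n + 1) x - η (n + 1) x'‖ ^ 2 := by
    intro x x'
    rw [← summable_nat_add_iff ⌈dist x x' ^ 2⌉₊]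
    refine Summable.of_nonneg_of_le (fun n => by positivity) (keyN x x') ?_
    exact (summable_nat_add_iff ⌈dist x x' ^ 2⌉₊).2 hS1
  refine ⟨fun x => hsum x x₀, ?_⟩
  have hS0 : 0 ≤ ∑' n : ℕ, ((n + 1 : ℕ) : ℝ) ^ q := tsum_nonneg fun n => by positivity
  refine ⟨1 + (∑' n : ℕ, ((n + 1 : ℕ) : ℝ) ^ q) / 4, by linarith, fun x x' => ?_⟩
  have hf := hsum x x'
  have hsplit := (Summable.sum_add_tsum_nat_add (f := fun n : ℕ => ‖η (n + 1) x - η (n + 1) x'‖ ^ 2)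
    ⌈dist x x' ^ 2⌉₊ hf).symm
  have hhead : ∑ i ∈ Finset.range ⌈dist x x' ^ 2⌉₊, ‖η (i + 1) x - η (i + 1) x'‖ ^ 2
      ≤ 4 * ⌈dist x x' ^ 2⌉₊ := by
    calc ∑ i ∈ Finset.range ⌈dist x x' ^ 2⌉₊, ‖η (i + 1) x - η (i + 1) x'‖ ^ 2
        ≤ ∑ _i ∈ Finset.range ⌈dist x x' ^ 2⌉₊, (4 : ℝ) :=
          Finset.sum_le_sum fun i _ => triv x x' i
      _ = 4 * ⌈dist x x' ^ 2⌉₊ := by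
          rw [Finset.sum_const, Finset.card_range, nsmul_eq_mul, mul_comm]
  have htail : (∑' n : ℕ, ‖η (n + ⌈dist x x' ^ 2⌉₊ + 1) x - η (n + ⌈dist x x' ^ 2⌉₊ + 1) x'‖ ^ 2)
      ≤ ∑' n : ℕ, ((n + 1 : ℕ) : ℝ) ^ q := by
    have hshift : Summable (fun n : ℕ => ((n + ⌈dist x x' ^ 2⌉₊ + 1 : ℕ) : ℝ) ^ q) :=
      (summable_nat_add_iff ⌈dist x x' ^ 2⌉₊).2 hS1
    have hb : (∑' n : ℕ, ‖η (n + ⌈dist x x' ^ 2⌉₊ + 1) x - η (n + ⌈dist x x' ^ 2⌉₊ + 1) x'‖ ^ 2)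
        ≤ ∑' n : ℕ, ((n + ⌈dist x x' ^ 2⌉₊ + 1 : ℕ) : ℝ) ^ q :=
      Summable.tsum_le_tsum (keyN x x') ((summable_nat_add_iff ⌈dist x x' ^ 2⌉₊).2 hf) hshift
    have hfull := Summable.sum_add_tsum_nat_add (f := fun n : ℕ => ((n + 1 : ℕ) : ℝ) ^ q)
      ⌈dist x x' ^ 2⌉₊ hS1
    have hpos : 0 ≤ ∑ i ∈ Finset.range ⌈dist x x' ^ 2⌉₊, ((i + 1 : ℕ) : ℝ) ^ q :=
      Finset.sum_nonneg fun i _ => by positivity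
    linarith
  have hNle : (⌈dist x x' ^ 2⌉₊ : ℝ) ≤ dist x x' ^ 2 + 1 := by
    have := Nat.ceil_lt_add_one (a := dist x x' ^ 2) (by positivity)
    linarith
  rw [hsplit]
  linarith
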